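/- Let $a \in (0,1)$. Define $w_0(u,v) = 1 + a u^2 - 2au + 2auv$ and $f_{0,2}(u,v) = \frac{u(1+2a-au-2av)}{w_0(u,v)}$. Then for all $(u,v)$ in the triangle $T$, $\partial_u f_{0,2}(u,v) \geq 1 - a > 0$. -/

import Mathlib

open Set

theorem stmt_13 (a : ℝ) (ha : a ∈ Ioo (0:ℝ) 1) (u v : ℝ)
    (hu : 0 ≤ u) (hv : 0 ≤ v) (huv : u + v ≤ 1) :
    HasDerivAt
      (fun u' : ℝ =>
        u'*(1 + 2*a - a*u' - 2*a*v) / (1 + a*u'^2 - 2*a*u' + 2*a*u'*v))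
      (((1 + a*u^2 - 2*a*u + 2*a*u*v)*(1 + 2*a*(1-u-v))
          + 2*a*u*(1 + a*u + 2*a*(1-u-v))*(1-u-v))
        / (1 + a*u^2 - 2*a*u + 2*a*u*v)^2) u ∧
    1 - a ≤ ((1 + a*u^2 - 2*a*u + 2*a*u*v)*(1 + 2*a*(1-u-v))
          + 2*a*u*(1 + a*u + 2*a*(1-u-v))*(1-u-v))
        / (1 + a*u^2 - 2*a*u + 2*a*u*v)^2 ∧
    0 < 1 - a := by
  obtain ⟨ha0, ha1⟩ := ha
  have hw : 0 < 1 + a*u^2 - 2*a*u + 2*a*u*v := by nlinarith [sq_nonneg (1-u), mul_nonneg hu hv, mul_nonneg (mul_nonneg ha0.le hu) hv, sq_nonneg u]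
  refine ⟨?_, ?_, by linarith⟩
  · have hN : HasDerivAt (fun u' : ℝ => u'*(1 + 2*a - a*u' - 2*a*v))
        (1 + 2*a - 2*a*u - 2*a*v) u := by
      have := ((hasDerivAt_id u).mul (((hasDerivAt_id u).const_mul a).const_sub (1 + 2*a - 2*a*v)))
      convert this using 1
      · rfl
      · rfl
      · ext x; simp only [id_eq, Pi.mul_apply]; ring
      · simp only [id_eq]; ring
    have hD : HasDerivAt (fun u' : ℝ => 1 + a*u'^2 - 2*a*u' + 2*a*u'*v)
        (2*a*u - 2*a + 2*a*v) u := by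
      have h1 : HasDerivAt (fun u' : ℝ => 1 + a*u'^2 - 2*a*u' + 2*a*u'*v)
          (a*(2*u) - 2*a + 2*a*v) u := by
        have := (((hasDerivAt_pow 2 u).const_mul a).const_add 1).sub
          ((hasDerivAt_id u).const_mul (2*a))
        have := this.add (((hasDerivAt_id u).const_mul (2*a)).mul_const v)
        convert this using 2
        · rfl
        · rfl
        · simp only [Pi.add_apply, Pi.sub_apply, id_eq]
        all_goals ring
      convert h1 using 1; ring
    have := hN.div hD (ne_of_gt hw)
    convert this using 1
    · rfl
    · rfl
    · rfl
    field_simp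
    ring
  · rw [le_div_iff₀ (by positivity)]
    set D := 1 + a*u^2 - 2*a*u + 2*a*u*v with hDdef
    have hs : (0:ℝ) ≤ 1-u-v := by linarith
    have hD1 : D ≤ 1 := by nlinarith [mul_nonneg (mul_nonneg ha0.le hu) hs, mul_nonneg (mul_nonneg ha0.le hu) (by linarith : (0:ℝ) ≤ 1-v)]
    have hterm : 0 ≤ 2*a*u*(1 + a*u + 2*a*(1-u-v))*(1-u-v) := by
      have h1 : (0:ℝ) ≤ 1 + a*u + 2*a*(1-u-v) := by positivity
      positivity
    have hD2 : D^2 ≤ D := by nlinarith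
    have h3 : 0 ≤ D*(2*a*(1-u-v)) := by positivity
    nlinarith [mul_nonneg ha0.le (sq_nonneg D)]
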